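/- Let Γ̃, B̃ ∈ ℝ^{n×k} with Γ̃ of full rank k, let ν_n > 0, x ≥ 0, Λ = diag(e^{ν_1 x},…,e^{ν_n x}) with ν_1 ≥ … ≥ ν_n > 0, and set Γ = ΛΓ̃, B = Λ^{-1}B̃, μ* = min σ(Γ̃ᵀΓ̃). Then ‖B(ΓᵀΓ)^{-1}Bᵀ‖ ≤ (1/μ*) e^{-4ν_n x} ‖B̃‖² and ‖Γ(ΓᵀΓ)^{-1}Bᵀ‖ ≤ (1/√μ*) e^{-2ν_n x} ‖B̃‖. -/

import Mathlib

open Matrix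

noncomputable def euclideanOpNorm {m n : ℕ} (M : Matrix (Fin m) (Fin n) ℝ) : ℝ :=
  ‖LinearMap.toContinuousLinearMap (Matrix.toEuclideanLin M)‖

open scoped Matrix.Norms.L2Operator

lemma euclideanOpNorm_eq_l2 {m n : ℕ} (M : Matrix (Fin m) (Fin n) ℝ) : euclideanOpNorm M = ‖M‖ := rfl

example {m n : ℕ} (M : Matrix (Fin m) (Fin n) ℝ) : Mᴴ = Mᵀ := conjTranspose_eq_transpose_of_trivial M

-- quadratic form lower bound from spectrum
lemma quad_lower {k : ℕ} {A : Matrix (Fin k) (Fin k) ℝ} (hA : A.IsHermitian)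
    {c : ℝ} (hc : ∀ μ ∈ spectrum ℝ A, c ≤ μ) (v : Fin k → ℝ) :
    c * (v ⬝ᵥ v) ≤ v ⬝ᵥ (A *ᵥ v) := by
  have hev : ∀ i, c ≤ hA.eigenvalues i := fun i => hc _ (hA.eigenvalues_mem_spectrum_real i)
  set U : Matrix (Fin k) (Fin k) ℝ := (hA.eigenvectorUnitary : Matrix (Fin k) (Fin k) ℝ) with hU
  have hstar : star U = Uᵀ := conjTranspose_eq_transpose_of_trivial U
  set w : Fin k → ℝ := Uᵀ *ᵥ v with hw
  have key : ∀ a b : Fin k → ℝ, (Uᵀ *ᵥ a) ⬝ᵥ b = a ⬝ᵥ (U *ᵥ b) := by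
    intro a b
    rw [mulVec_transpose, ← dotProduct_mulVec]
  have hww : w ⬝ᵥ w = v ⬝ᵥ v := by
    rw [hw, key, mulVec_mulVec]
    have : U * Uᵀ = 1 := by
      rw [← hstar]; exact (Matrix.mem_unitaryGroup_iff.mp hA.eigenvectorUnitary.2)
    rw [this, one_mulVec]
  have hform : v ⬝ᵥ (A *ᵥ v) = w ⬝ᵥ (diagonal hA.eigenvalues *ᵥ w) := by
    conv_lhs => rw [hA.spectral_theorem, Unitary.conjStarAlgAut_apply]
    rw [← hU, hstar, ← mulVec_mulVec, ← mulVec_mulVec, ← key, ← hw]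
    norm_num [RCLike.ofReal_real_eq_id]
  rw [hform, ← hww]
  have hdot : w ⬝ᵥ (diagonal hA.eigenvalues *ᵥ w) = ∑ i, hA.eigenvalues i * (w i)^2 := by
    simp [dotProduct, mulVec_diagonal]
    exact Finset.sum_congr rfl fun i _ => by ring
  rw [hdot, dotProduct, Finset.mul_sum]
  refine Finset.sum_le_sum fun i _ => ?_
  have := mul_le_mul_of_nonneg_right (hev i) (sq_nonneg (w i))
  calc c * (w i * w i) = c * (w i)^2 := by ring
    _ ≤ hA.eigenvalues i * (w i)^2 := this

lemma enorm_sq {k : ℕ} (u : EuclideanSpace ℝ (Fin k)) : ‖u‖^2 = u ⬝ᵥ u := by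
  rw [← real_inner_self_eq_norm_sq]
  simp only [PiLp.inner_apply, RCLike.inner_apply, conj_trivial, dotProduct]

lemma ecauchy {k : ℕ} (u z : EuclideanSpace ℝ (Fin k)) : u ⬝ᵥ z ≤ ‖u‖ * ‖z‖ := by
  have h := real_inner_le_norm u z
  have : (inner ℝ u z : ℝ) = u ⬝ᵥ z := by simp [PiLp.inner_apply, RCLike.inner_apply, dotProduct, mul_comm]
  linarith [h, this.symm.le]

lemma dot_self_pos {k : ℕ} {x : Fin k → ℝ} (hx : x ≠ 0) : 0 < x ⬝ᵥ x := by
  obtain ⟨i, hi⟩ : ∃ i, x i ≠ 0 := by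
    by_contra h; push_neg at h; exact hx (funext h)
  exact Finset.sum_pos' (fun j _ => mul_self_nonneg _) ⟨i, Finset.mem_univ i, mul_self_pos.mpr hi⟩

lemma inv_norm_bound {k : ℕ} {A : Matrix (Fin k) (Fin k) ℝ} (hA : A.IsHermitian) {c : ℝ} (hc : 0 < c)
    (hq : ∀ v : Fin k → ℝ, c * (v ⬝ᵥ v) ≤ v ⬝ᵥ (A *ᵥ v)) :
    A.PosDef ∧ euclideanOpNorm A⁻¹ ≤ 1 / c := by
  have hpd : A.PosDef := by
    refine Matrix.PosDef.of_dotProduct_mulVec_pos hA fun x hx => ?_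
    have h1 : 0 < x ⬝ᵥ x := dot_self_pos hx
    have : (0:ℝ) < x ⬝ᵥ (A *ᵥ x) := lt_of_lt_of_le (mul_pos hc h1) (hq x)
    simpa using this
  have hdet : IsUnit A.det := hpd.det_pos.ne'.isUnit
  refine ⟨hpd, ?_⟩
  show ‖LinearMap.toContinuousLinearMap (Matrix.toEuclideanLin A⁻¹)‖ ≤ 1 / c
  refine ContinuousLinearMap.opNorm_le_bound _ (by positivity) fun v => ?_
  set w : EuclideanSpace ℝ (Fin k) := LinearMap.toContinuousLinearMap (Matrix.toEuclideanLin A⁻¹) v with hwdef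
  have hAv : A *ᵥ (w : Fin k → ℝ) = v := by
    show A *ᵥ (A⁻¹ *ᵥ v) = v
    rw [mulVec_mulVec, mul_nonsing_inv A hdet, one_mulVec]
  have h2 : c * ‖w‖^2 ≤ ‖w‖ * ‖v‖ := by
    have h3 := hq w
    rw [hAv] at h3
    calc c * ‖w‖^2 = c * (w ⬝ᵥ w) := by rw [enorm_sq]
      _ ≤ w ⬝ᵥ v := h3
      _ ≤ ‖w‖ * ‖v‖ := ecauchy w v
  rcases eq_or_lt_of_le (norm_nonneg w) with h0 | h0
  · rw [← h0]; positivity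
  · rw [div_mul_eq_mul_div, le_div_iff₀ hc]
    nlinarith [h2, h0]

lemma diag_norm_le {m : ℕ} (d : Fin m → ℝ) {r : ℝ} (hr : 0 ≤ r) (hd : ∀ i, |d i| ≤ r) :
    euclideanOpNorm (diagonal d) ≤ r := by
  show ‖LinearMap.toContinuousLinearMap (Matrix.toEuclideanLin (diagonal d))‖ ≤ r
  refine ContinuousLinearMap.opNorm_le_bound _ hr fun v => ?_
  have hl : ‖LinearMap.toContinuousLinearMap (Matrix.toEuclideanLin (diagonal d)) v‖ ^ 2
      = ∑ i, (d i * v i)^2 := by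
    rw [enorm_sq]
    show (diagonal d *ᵥ (v : Fin m → ℝ)) ⬝ᵥ (diagonal d *ᵥ (v : Fin m → ℝ)) = _
    simp [dotProduct, mulVec_diagonal]
    exact Finset.sum_congr rfl fun i _ => by ring
  have hr2 : ‖LinearMap.toContinuousLinearMap (Matrix.toEuclideanLin (diagonal d)) v‖ ^ 2
      ≤ (r * ‖v‖)^2 := by
    rw [hl]
    have : (r*‖v‖)^2 = r^2 * ‖v‖^2 := by ring
    rw [this, enorm_sq]
    rw [dotProduct, Finset.mul_sum]
    refine Finset.sum_le_sum fun i _ => ?_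
    have h1 : (d i)^2 ≤ r^2 := by
      have := hd i; nlinarith [abs_nonneg (d i), sq_abs (d i)]
    nlinarith [sq_nonneg (v i), mul_self_nonneg (v i)]
  have h4 := Real.sqrt_le_sqrt hr2
  rwa [Real.sqrt_sq (norm_nonneg _), Real.sqrt_sq (by positivity)] at h4

set_option maxHeartbeats 2000000 in
theorem stmt_13 (n k : ℕ) (Γtld Btld : Matrix (Fin (n + 1)) (Fin k) ℝ)
    (hrank : Γtld.rank = k)
    (ν : Fin (n + 1) → ℝ) (hν : ∀ i j : Fin (n + 1), i ≤ j → ν j ≤ ν i)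
    (hνpos : ∀ i, 0 < ν i) (x : ℝ) (hx : 0 ≤ x)
    (L : Matrix (Fin (n + 1)) (Fin (n + 1)) ℝ)
    (hL : L = Matrix.diagonal fun i => Real.exp (ν i * x))
    (Γ B : Matrix (Fin (n + 1)) (Fin k) ℝ)
    (hΓ : Γ = L * Γtld) (hB : B = L⁻¹ * Btld)
    (μstar : ℝ) (hμ1 : μstar ∈ spectrum ℝ (Γtldᵀ * Γtld))
    (hμ2 : ∀ μ ∈ spectrum ℝ (Γtldᵀ * Γtld), μstar ≤ μ) (hμpos : 0 < μstar) :
    euclideanOpNorm (B * (Γᵀ * Γ)⁻¹ * Bᵀ) ≤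
        (1 / μstar) * Real.exp (-4 * ν (Fin.last n) * x) * euclideanOpNorm Btld ^ 2 ∧
    euclideanOpNorm (Γ * (Γᵀ * Γ)⁻¹ * Bᵀ) ≤
        (1 / Real.sqrt μstar) * Real.exp (-2 * ν (Fin.last n) * x) * euclideanOpNorm Btld := by
  set l := ν (Fin.last n) with hl
  set e := Real.exp (l * x) with he
  have hepos : 0 < e := Real.exp_pos _
  set A := Γᵀ * Γ with hA
  have hherm : A.IsHermitian := by
    have h := isHermitian_conjTranspose_mul_self Γ
    rwa [conjTranspose_eq_transpose_of_trivial] at h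
  have hAt : Aᵀ = A := hherm.eq.symm.trans (conjTranspose_eq_transpose_of_trivial A) |>.symm
  -- quadratic form lower bound for A
  have hqA : ∀ v : Fin k → ℝ, (μstar * e^2) * (v ⬝ᵥ v) ≤ v ⬝ᵥ (A *ᵥ v) := by
    intro v
    have hherm' : (Γtldᵀ * Γtld).IsHermitian := by
      have h := isHermitian_conjTranspose_mul_self Γtld
      rwa [conjTranspose_eq_transpose_of_trivial] at h
    have s1 : v ⬝ᵥ (A *ᵥ v) = (Γ *ᵥ v) ⬝ᵥ (Γ *ᵥ v) := by
      rw [hA, ← mulVec_mulVec, dotProduct_mulVec, vecMul_transpose]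
    have s2 : Γ *ᵥ v = L *ᵥ (Γtld *ᵥ v) := by rw [hΓ, ← mulVec_mulVec]
    set u := Γtld *ᵥ v with hu
    have s5 : μstar * (v ⬝ᵥ v) ≤ u ⬝ᵥ u := by
      have h := quad_lower hherm' hμ2 v
      rwa [← mulVec_mulVec, dotProduct_mulVec, vecMul_transpose] at h
    have s4 : e^2 * (u ⬝ᵥ u) ≤ (L *ᵥ u) ⬝ᵥ (L *ᵥ u) := by
      rw [hL, dotProduct, dotProduct, Finset.mul_sum]
      refine Finset.sum_le_sum fun i _ => ?_
      simp only [mulVec_diagonal]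
      have h1 : e ≤ Real.exp (ν i * x) :=
        Real.exp_le_exp.mpr (mul_le_mul_of_nonneg_right (hν i (Fin.last n) (Fin.le_last i)) hx)
      have h2 : e * e ≤ Real.exp (ν i * x) * Real.exp (ν i * x) :=
        mul_le_mul h1 h1 hepos.le (le_trans hepos.le h1)
      nlinarith [h2, mul_self_nonneg (u i)]
    calc (μstar * e^2) * (v ⬝ᵥ v) = e^2 * (μstar * (v ⬝ᵥ v)) := by ring
      _ ≤ e^2 * (u ⬝ᵥ u) := mul_le_mul_of_nonneg_left s5 (by positivity)
      _ ≤ (L *ᵥ u) ⬝ᵥ (L *ᵥ u) := s4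
      _ = v ⬝ᵥ (A *ᵥ v) := by rw [s1, s2]
  obtain ⟨hpd, hinvnorm⟩ := inv_norm_bound hherm (by positivity) hqA
  have hdet : IsUnit A.det := hpd.det_pos.ne'.isUnit
  -- L inverse
  have hLinv : L⁻¹ = diagonal (fun i => Real.exp (-(ν i * x))) := by
    apply inv_eq_right_inv
    rw [hL, diagonal_mul_diagonal]
    simp [← Real.exp_add]
  have hBnorm : euclideanOpNorm B ≤ e⁻¹ * euclideanOpNorm Btld := by
    rw [hB, euclideanOpNorm_eq_l2, euclideanOpNorm_eq_l2]
    calc ‖L⁻¹ * Btld‖ ≤ ‖L⁻¹‖ * ‖Btld‖ := l2_opNorm_mul _ _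
      _ ≤ e⁻¹ * ‖Btld‖ := by
        refine mul_le_mul_of_nonneg_right ?_ (norm_nonneg _)
        rw [← euclideanOpNorm_eq_l2, hLinv]
        have he' : e⁻¹ = Real.exp (-(l * x)) := by rw [Real.exp_neg]
        rw [he']
        refine diag_norm_le _ (Real.exp_pos _).le fun i => ?_
        rw [abs_of_pos (Real.exp_pos _)]
        apply Real.exp_le_exp.mpr
        have := mul_le_mul_of_nonneg_right (hν i (Fin.last n) (Fin.le_last i)) hx
        linarith
  have hBt : euclideanOpNorm Bᵀ = euclideanOpNorm B := by
    rw [euclideanOpNorm_eq_l2, euclideanOpNorm_eq_l2, ← conjTranspose_eq_transpose_of_trivial]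
    exact l2_opNorm_conjTranspose B
  have hBnn : (0:ℝ) ≤ euclideanOpNorm Btld := by rw [euclideanOpNorm_eq_l2]; exact norm_nonneg _
  set nB := euclideanOpNorm Btld with hnB
  have claim1 : euclideanOpNorm (B * A⁻¹ * Bᵀ) ≤ (1 / μstar) * Real.exp (-4 * l * x) * nB ^ 2 := by
    have step : euclideanOpNorm (B * A⁻¹ * Bᵀ) ≤
        (e⁻¹ * nB) * (1/(μstar * e^2)) * (e⁻¹ * nB) := by
      have m1 : euclideanOpNorm (B * A⁻¹ * Bᵀ) ≤ euclideanOpNorm (B * A⁻¹) * euclideanOpNorm Bᵀ := by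
        simp only [euclideanOpNorm_eq_l2]; exact l2_opNorm_mul _ _
      have m2 : euclideanOpNorm (B * A⁻¹) ≤ euclideanOpNorm B * euclideanOpNorm A⁻¹ := by
        simp only [euclideanOpNorm_eq_l2]; exact l2_opNorm_mul _ _
      have hBnn' : (0:ℝ) ≤ euclideanOpNorm B := by rw [euclideanOpNorm_eq_l2]; exact norm_nonneg _
      have hAnn : (0:ℝ) ≤ euclideanOpNorm A⁻¹ := by rw [euclideanOpNorm_eq_l2]; exact norm_nonneg _
      have hBtnn : (0:ℝ) ≤ euclideanOpNorm Bᵀ := by rw [euclideanOpNorm_eq_l2]; exact norm_nonneg _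
      calc euclideanOpNorm (B * A⁻¹ * Bᵀ) ≤ euclideanOpNorm B * euclideanOpNorm A⁻¹ * euclideanOpNorm Bᵀ := by
            refine le_trans m1 (mul_le_mul_of_nonneg_right m2 hBtnn)
        _ ≤ (e⁻¹ * nB) * (1/(μstar * e^2)) * (e⁻¹ * nB) := by
            rw [hBt]
            have h1 : euclideanOpNorm A⁻¹ ≤ 1/(μstar * e^2) := hinvnorm
            refine mul_le_mul (mul_le_mul hBnorm h1 hAnn (by positivity)) hBnorm hBnn' (by positivity)
    refine le_trans step (le_of_eq ?_)
    have he4 : Real.exp (-4 * l * x) = (e⁻¹)^4 := by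
      rw [← Real.exp_neg, ← Real.exp_nat_mul]
      norm_num; ring_nf
    rw [he4]
    field_simp
  refine ⟨claim1, ?_⟩
  -- second claim
  set M := Γ * A⁻¹ * Bᵀ with hM
  have hMtM : Mᵀ * M = B * A⁻¹ * Bᵀ := by
    have ht : Mᵀ = B * (A⁻¹ * Γᵀ) := by
      rw [hM, transpose_mul, transpose_mul, transpose_transpose, transpose_nonsing_inv, hAt]
    rw [ht, hM]
    have assoc1 : B * (A⁻¹ * Γᵀ) * (Γ * A⁻¹ * Bᵀ) = B * (A⁻¹ * (Γᵀ * Γ) * A⁻¹) * Bᵀ := by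
      simp only [Matrix.mul_assoc]
    rw [assoc1, ← hA, Matrix.nonsing_inv_mul A hdet, Matrix.one_mul]
  have hsq : euclideanOpNorm M * euclideanOpNorm M = euclideanOpNorm (Mᵀ * M) := by
    rw [euclideanOpNorm_eq_l2, euclideanOpNorm_eq_l2, ← conjTranspose_eq_transpose_of_trivial]
    exact (l2_opNorm_conjTranspose_mul_self M).symm
  have hMnn : (0:ℝ) ≤ euclideanOpNorm M := by rw [euclideanOpNorm_eq_l2]; exact norm_nonneg _
  set R2 := (1 / Real.sqrt μstar) * Real.exp (-2 * l * x) * nB with hR2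
  have hR2nn : 0 ≤ R2 := by
    have h1 : 0 ≤ Real.sqrt μstar := Real.sqrt_nonneg _
    positivity
  have hR2sq : R2 * R2 = (1 / μstar) * Real.exp (-4 * l * x) * nB ^ 2 := by
    rw [hR2]
    have h1 : Real.sqrt μstar * Real.sqrt μstar = μstar := Real.mul_self_sqrt hμpos.le
    have h2 : Real.exp (-2*l*x) * Real.exp (-2*l*x) = Real.exp (-4*l*x) := by
      rw [← Real.exp_add]; ring_nf
    calc 1 / Real.sqrt μstar * Real.exp (-2*l*x) * nB * (1 / Real.sqrt μstar * Real.exp (-2*l*x) * nB)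
        = 1 / (Real.sqrt μstar * Real.sqrt μstar) * (Real.exp (-2*l*x) * Real.exp (-2*l*x)) * nB^2 := by
          ring
      _ = 1 / μstar * Real.exp (-4*l*x) * nB ^ 2 := by rw [h1, h2]
  have hfin : euclideanOpNorm M * euclideanOpNorm M ≤ R2 * R2 := by
    rw [hsq, hMtM, hR2sq]
    exact claim1
  nlinarith [hfin, hMnn, hR2nn]
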